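/- For real parameters θ¹, θ² with θ¹+θ² > 0 and θ¹−θ² > 0, one has ∫_{ℝ} log(sech x) · p(x;θ¹,θ²) dx = (1/2)ψ((θ¹−θ²)/2) + (1/2)ψ((θ¹+θ²)/2) − ψ(θ¹) + log 2. -/

import Mathlib

open MeasureTheory

/-- The hyperbolic secant function: `sech x = 2 / (eˣ + e⁻ˣ)`. -/
noncomputable def sech (x : ℝ) : ℝ := 1 / Real.cosh x

/-- The beta-logistic density. -/
noncomputable def betaLogisticPDF (θ1 θ2 x : ℝ) : ℝ :=
  (2 : ℝ) ^ (1 - θ1) * sech x ^ θ1 * Real.exp (θ2 * x) /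
    (Real.Gamma ((θ1 - θ2) / 2) * Real.Gamma ((θ1 + θ2) / 2) / Real.Gamma θ1)

/-- The digamma function `ψ(z) = d/dz log Γ(z)`. -/
noncomputable def digamma (z : ℝ) : ℝ := deriv (fun x => Real.log (Real.Gamma x)) z

section Aux

open Real Set

lemma sech_pos (x : ℝ) : 0 < sech x := by
  unfold sech; positivity

lemma sech_le_one (x : ℝ) : sech x ≤ 1 := by
  unfold sech
  rw [div_le_one (Real.cosh_pos x)]
  exact Real.one_le_cosh x

lemma cosh_le_exp_abs (x : ℝ) : Real.cosh x ≤ Real.exp |x| := by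
  rw [Real.cosh_eq]
  have h1 : Real.exp x ≤ Real.exp |x| := Real.exp_le_exp.2 (le_abs_self x)
  have h2 : Real.exp (-x) ≤ Real.exp |x| := Real.exp_le_exp.2 (neg_le_abs x)
  linarith

lemma exp_abs_le_two_cosh (x : ℝ) : Real.exp |x| ≤ 2 * Real.cosh x := by
  rw [Real.cosh_eq]
  rcases abs_cases x with ⟨h, _⟩ | ⟨h, _⟩ <;> rw [h] <;>
    [linarith [Real.exp_pos (-x)]; linarith [Real.exp_pos x]]

lemma sech_le_two_exp (x : ℝ) : sech x ≤ 2 * Real.exp (-|x|) := by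
  unfold sech
  rw [Real.exp_neg, div_le_iff₀ (Real.cosh_pos x)]
  nlinarith [exp_abs_le_two_cosh x, inv_pos.2 (Real.exp_pos |x|),
    mul_inv_cancel₀ (ne_of_gt (Real.exp_pos |x|))]

lemma abs_log_sech_le (x : ℝ) : |Real.log (sech x)| ≤ |x| := by
  unfold sech
  rw [Real.log_div one_ne_zero (ne_of_gt (Real.cosh_pos x)), Real.log_one, zero_sub, abs_neg]
  rw [abs_of_nonneg (Real.log_nonneg (Real.one_le_cosh x))]
  calc Real.log (Real.cosh x) ≤ Real.log (Real.exp |x|) :=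
        Real.log_le_log (Real.cosh_pos x) (cosh_le_exp_abs x)
    _ = |x| := Real.log_exp _

lemma continuous_sech : Continuous sech :=
  continuous_const.div Real.continuous_cosh (fun x => (Real.cosh_pos x).ne')

lemma continuous_sech_rpow (q : ℝ) : Continuous (fun x => sech x ^ q) :=
  continuous_sech.rpow_const (fun x => Or.inl (sech_pos x).ne')

lemma integrable_exp_neg_abs {c : ℝ} (hc : 0 < c) :
    Integrable (fun x : ℝ => Real.exp (-(c * |x|))) := by
  have hmeas : AEStronglyMeasurable (fun x : ℝ => Real.exp (-(c * |x|))) volume :=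
    (Real.continuous_exp.comp ((continuous_const.mul continuous_abs).neg)).aestronglyMeasurable
  rw [← integrableOn_univ, ← Set.Iio_union_Ici (a := (0:ℝ))]
  apply IntegrableOn.union
  · have h1 : IntegrableOn (fun x : ℝ => Real.exp (-c * x)) (Ioi 0) :=
      exp_neg_integrableOn_Ioi 0 hc
    have h2 : IntegrableOn (fun x : ℝ => Real.exp (-(c * |x|))) (Ioi 0) := by
      apply h1.congr_fun ?_ measurableSet_Ioi
      intro x hx
      simp only []
      rw [abs_of_pos hx, neg_mul]
    have himg : (fun x : ℝ => -x) '' (Ioi 0) = Iio 0 := by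
      ext y; simp [neg_lt, lt_neg]
    rw [← himg]
    rw [integrableOn_image_iff_integrableOn_abs_deriv_smul measurableSet_Ioi
      (fun x _ => (hasDerivAt_neg x).hasDerivWithinAt) (neg_injective.injOn)]
    apply h2.congr_fun ?_ measurableSet_Ioi
    intro x hx
    simp [abs_neg]
  · have h1 : IntegrableOn (fun x : ℝ => Real.exp (-c * x)) (Ici 0) := by
      rw [integrableOn_Ici_iff_integrableOn_Ioi]
      exact exp_neg_integrableOn_Ioi 0 hc
    apply h1.congr_fun ?_ measurableSet_Ici
    intro x hx
    simp only []
    rw [abs_of_nonneg hx, neg_mul]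

lemma integrable_abs_mul_exp_neg_abs {c : ℝ} (hc : 0 < c) :
    Integrable (fun x : ℝ => |x| * Real.exp (-(c * |x|))) := by
  have key : ∀ x : ℝ, |x| * Real.exp (-(c * |x|)) ≤ (2 / c) * Real.exp (-(c / 2 * |x|)) := by
    intro x
    have h1 : c / 2 * |x| ≤ Real.exp (c / 2 * |x|) - 1 := by
      linarith [Real.add_one_le_exp (c / 2 * |x|)]
    have h2 : |x| ≤ (2 / c) * Real.exp (c / 2 * |x|) := by
      have hpos : (0:ℝ) < 2 / c := by positivity
      calc |x| = (2/c) * (c/2*|x|) := by field_simp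
        _ ≤ (2/c) * (Real.exp (c/2*|x|) - 1) := mul_le_mul_of_nonneg_left h1 hpos.le
        _ ≤ (2/c) * Real.exp (c/2*|x|) := by nlinarith [Real.exp_pos (c/2*|x|)]
    calc |x| * Real.exp (-(c * |x|)) ≤ ((2/c) * Real.exp (c/2*|x|)) * Real.exp (-(c*|x|)) := by
          apply mul_le_mul_of_nonneg_right h2 (Real.exp_pos _).le
      _ = (2 / c) * Real.exp (-(c / 2 * |x|)) := by
          rw [mul_assoc, ← Real.exp_add]; ring_nf
  have hint := (integrable_exp_neg_abs (by positivity : (0:ℝ) < c/2)).const_mul (2/c)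
  apply hint.mono' ?_ (ae_of_all _ fun x => ?_)
  · exact (continuous_abs.mul
      (Real.continuous_exp.comp ((continuous_const.mul continuous_abs).neg))).aestronglyMeasurable
  · rw [Real.norm_eq_abs, abs_of_nonneg (by positivity)]
    exact key x

lemma sech_exp_le (q θ2 x : ℝ) (hq : 0 < q) :
    sech x ^ q * Real.exp (θ2 * x) ≤ 2 ^ q * Real.exp (-((q - |θ2|) * |x|)) := by
  have h1 : sech x ^ q ≤ (2 * Real.exp (-|x|)) ^ q :=
    Real.rpow_le_rpow (sech_pos x).le (sech_le_two_exp x) hq.le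
  have h2 : Real.exp (θ2 * x) ≤ Real.exp (|θ2| * |x|) := by
    apply Real.exp_le_exp.2
    calc θ2 * x ≤ |θ2 * x| := le_abs_self _
      _ = |θ2| * |x| := abs_mul _ _
  calc sech x ^ q * Real.exp (θ2 * x)
      ≤ (2 * Real.exp (-|x|)) ^ q * Real.exp (|θ2| * |x|) :=
        mul_le_mul h1 h2 (Real.exp_pos _).le (by positivity)
    _ = 2 ^ q * Real.exp (-((q - |θ2|) * |x|)) := by
        rw [Real.mul_rpow (by norm_num) (Real.exp_pos _).le, ← Real.exp_mul,
          mul_assoc, ← Real.exp_add]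
        congr 2
        ring

lemma abs_lt_of_pm {q θ2 : ℝ} (h1 : 0 < q + θ2) (h2 : 0 < q - θ2) : |θ2| < q :=
  abs_lt.2 ⟨by linarith, by linarith⟩

lemma integrable_sech_exp (q θ2 : ℝ) (h1 : 0 < q + θ2) (h2 : 0 < q - θ2) :
    Integrable (fun x : ℝ => sech x ^ q * Real.exp (θ2 * x)) := by
  have hδ : 0 < q - |θ2| := sub_pos.2 (abs_lt_of_pm h1 h2)
  have hq : 0 < q := lt_of_le_of_lt (abs_nonneg θ2) (abs_lt_of_pm h1 h2)
  apply ((integrable_exp_neg_abs hδ).const_mul ((2:ℝ) ^ q)).mono'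
  · exact ((continuous_sech_rpow q).mul
      (Real.continuous_exp.comp (continuous_const.mul continuous_id))).aestronglyMeasurable
  · refine ae_of_all _ fun x => ?_
    rw [Real.norm_eq_abs, abs_of_nonneg
      (mul_pos (Real.rpow_pos_of_pos (sech_pos x) q) (Real.exp_pos _)).le]
    exact sech_exp_le q θ2 x hq

lemma integrable_abs_sech_exp (q θ2 : ℝ) (h1 : 0 < q + θ2) (h2 : 0 < q - θ2) :
    Integrable (fun x : ℝ => |x| * (sech x ^ q * Real.exp (θ2 * x))) := by
  have hδ : 0 < q - |θ2| := sub_pos.2 (abs_lt_of_pm h1 h2)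
  have hq : 0 < q := lt_of_le_of_lt (abs_nonneg θ2) (abs_lt_of_pm h1 h2)
  apply ((integrable_abs_mul_exp_neg_abs hδ).const_mul ((2:ℝ) ^ q)).mono'
  · exact (continuous_abs.mul ((continuous_sech_rpow q).mul
      (Real.continuous_exp.comp (continuous_const.mul continuous_id)))).aestronglyMeasurable
  · refine ae_of_all _ fun x => ?_
    rw [Real.norm_eq_abs, abs_of_nonneg (mul_nonneg (abs_nonneg x)
      (mul_pos (Real.rpow_pos_of_pos (sech_pos x) q) (Real.exp_pos _)).le)]
    calc |x| * (sech x ^ q * Real.exp (θ2 * x))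
        ≤ |x| * (2 ^ q * Real.exp (-((q - |θ2|) * |x|))) :=
          mul_le_mul_of_nonneg_left (sech_exp_le q θ2 x hq) (abs_nonneg x)
      _ = 2 ^ q * (|x| * Real.exp (-((q - |θ2|) * |x|))) := by ring

/-- the logistic map `x ↦ eˣ/(eˣ+e⁻ˣ)` -/
noncomputable def lmap (x : ℝ) : ℝ := Real.exp x / (Real.exp x + Real.exp (-x))

lemma lmap_hasDerivAt (x : ℝ) :
    HasDerivAt lmap (2 / (Real.exp x + Real.exp (-x)) ^ 2) x := by
  have hden : Real.exp x + Real.exp (-x) ≠ 0 := by positivity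
  have h1 : HasDerivAt (fun x : ℝ => Real.exp x) (Real.exp x) x := Real.hasDerivAt_exp x
  have h2 : HasDerivAt (fun x : ℝ => Real.exp (-x)) (-Real.exp (-x)) x := by
    have := (Real.hasDerivAt_exp (-x)).comp x (hasDerivAt_neg x)
    simpa [Function.comp_def] using this
  have := h1.div (h1.add h2) hden
  refine this.congr_deriv ?_
  have e2 : Real.exp x * Real.exp (-x) = 1 := by rw [← Real.exp_add]; simp
  simp only [Pi.add_apply]
  field_simp
  linear_combination (2 : ℝ) * e2

lemma lmap_eq (x : ℝ) : lmap x = Real.exp x / (2 * Real.cosh x) := by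
  rw [lmap, Real.cosh_eq]; ring_nf

lemma one_sub_lmap (x : ℝ) : 1 - lmap x = Real.exp (-x) / (2 * Real.cosh x) := by
  have h : (2 : ℝ) * Real.cosh x ≠ 0 := by positivity
  rw [lmap_eq, eq_div_iff h, sub_mul, div_mul_cancel₀ _ h, Real.cosh_eq]
  ring

lemma lmap_mem_Ioo (x : ℝ) : lmap x ∈ Set.Ioo (0:ℝ) 1 := by
  constructor
  · rw [lmap]; positivity
  · rw [lmap, div_lt_one (by positivity)]
    nlinarith [Real.exp_pos (-x), Real.exp_pos x]

lemma lmap_strictMono : StrictMono lmap := by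
  intro x y hxy
  rw [lmap, lmap, div_lt_div_iff₀ (by positivity) (by positivity)]
  have h1 : Real.exp x * Real.exp (-y) < Real.exp y * Real.exp (-x) := by
    rw [← Real.exp_add, ← Real.exp_add]
    exact Real.exp_lt_exp.2 (by linarith)
  nlinarith [Real.exp_pos x, Real.exp_pos y]

lemma lmap_range : Set.range lmap = Set.Ioo (0:ℝ) 1 := by
  apply Set.Subset.antisymm
  · rintro _ ⟨x, rfl⟩; exact lmap_mem_Ioo x
  · rintro t ⟨ht0, ht1⟩
    refine ⟨Real.log (t / (1 - t)) / 2, ?_⟩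
    have hu : (0:ℝ) < t / (1 - t) := by
      apply div_pos ht0; linarith
    have hx2 : Real.exp (2 * (Real.log (t / (1 - t)) / 2)) = t / (1 - t) := by
      rw [show 2 * (Real.log (t / (1 - t)) / 2) = Real.log (t / (1 - t)) by ring,
        Real.exp_log hu]
    set x := Real.log (t / (1 - t)) / 2 with hxdef
    have e2 : Real.exp x * Real.exp (-x) = 1 := by
      rw [← Real.exp_add]; simp
    have key : lmap x = Real.exp (2*x) / (Real.exp (2*x) + 1) := by
      rw [lmap]
      rw [div_eq_div_iff (by positivity) (by positivity),
        show (2:ℝ)*x = x + x by ring, Real.exp_add]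
      nlinarith [e2, Real.exp_pos x]
    have h1t : (1:ℝ) - t ≠ 0 := by intro h; rw [sub_eq_zero] at h; exact absurd h.symm (ne_of_lt ht1)
    have hden : (1 - t) * (t / (1 - t) + 1) = 1 := by field_simp; ring
    rw [key, hx2, div_div, hden, div_one]

lemma subst_eq (s θ2 : ℝ) :
    ∫ x : ℝ, sech x ^ s * Real.exp (θ2 * x)
      = ∫ t in Set.Ioo (0:ℝ) 1,
          (2:ℝ) ^ (s-1) * (t ^ ((s+θ2)/2 - 1) * (1-t) ^ ((s-θ2)/2 - 1)) := by
  have himg : lmap '' Set.univ = Set.Ioo (0:ℝ) 1 := by rw [Set.image_univ, lmap_range]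
  rw [← himg, integral_image_eq_integral_abs_deriv_smul MeasurableSet.univ
    (fun x _ => (lmap_hasDerivAt x).hasDerivWithinAt) (lmap_strictMono.injective.injOn) _,
    Measure.restrict_univ]
  congr 1
  funext x
  have hc : (0:ℝ) < 2 * Real.cosh x := by positivity
  have hcne : (2:ℝ) * Real.cosh x ≠ 0 := hc.ne'
  have hden : Real.exp x + Real.exp (-x) = 2 * Real.cosh x := by
    rw [Real.cosh_eq]; ring
  have hsech : sech x = 2 / (2 * Real.cosh x) := by
    rw [sech]
    field_simp
  rw [smul_eq_mul, hden, one_sub_lmap, lmap_eq]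
  rw [abs_of_pos (by positivity : (0:ℝ) < 2 / (2 * Real.cosh x) ^ 2)]
  rw [hsech]
  rw [Real.rpow_def_of_pos (by positivity : (0:ℝ) < 2 / (2 * Real.cosh x)),
    Real.log_div two_ne_zero hcne]
  rw [Real.rpow_def_of_pos (by positivity : (0:ℝ) < Real.exp x / (2 * Real.cosh x)),
    Real.log_div (Real.exp_ne_zero x) hcne, Real.log_exp]
  rw [Real.rpow_def_of_pos (by positivity : (0:ℝ) < Real.exp (-x) / (2 * Real.cosh x)),
    Real.log_div (Real.exp_ne_zero (-x)) hcne, Real.log_exp]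
  rw [Real.rpow_def_of_pos (by norm_num : (0:ℝ) < 2)]
  have h2c : (2:ℝ) / (2 * Real.cosh x) ^ 2
      = Real.exp (Real.log 2 - 2 * Real.log (2 * Real.cosh x)) := by
    rw [Real.exp_sub, Real.exp_log (by norm_num : (0:ℝ) < 2)]
    congr 1
    rw [show (2:ℝ) * Real.log (2 * Real.cosh x) = Real.log ((2 * Real.cosh x) ^ 2) by
      rw [Real.log_pow]; push_cast; ring]
    rw [Real.exp_log (by positivity)]
  rw [h2c, ← Real.exp_add, ← Real.exp_add, ← Real.exp_add, ← Real.exp_add]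
  exact congrArg Real.exp (by ring)

lemma beta_Ioo {a b : ℝ} (ha : 0 < a) (hb : 0 < b) :
    ∫ t in Set.Ioo (0:ℝ) 1, t ^ (a - 1) * (1 - t) ^ (b - 1) =
      Real.Gamma a * Real.Gamma b / Real.Gamma (a + b) := by
  have key := Complex.Gamma_mul_Gamma_eq_betaIntegral (s := (a : ℂ)) (t := (b : ℂ))
    (by simpa using ha) (by simpa using hb)
  have hI : Complex.betaIntegral (a : ℂ) (b : ℂ) =
      ((∫ t in Set.Ioo (0:ℝ) 1, t ^ (a - 1) * (1 - t) ^ (b - 1) : ℝ) : ℂ) := by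
    rw [Complex.betaIntegral, intervalIntegral.integral_of_le zero_le_one,
      MeasureTheory.integral_Ioc_eq_integral_Ioo]
    trans (∫ t in Set.Ioo (0:ℝ) 1, ((t ^ (a - 1) * (1 - t) ^ (b - 1) : ℝ) : ℂ))
    · apply MeasureTheory.setIntegral_congr_fun measurableSet_Ioo
      intro x hx
      obtain ⟨hx0, hx1⟩ := hx
      simp only []
      rw [Complex.ofReal_mul, Complex.ofReal_cpow hx0.le,
        Complex.ofReal_cpow (by linarith : (0:ℝ) ≤ 1 - x)]
      push_cast
      ring
    · exact integral_ofReal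
  rw [hI, ← Complex.ofReal_add, Complex.Gamma_ofReal, Complex.Gamma_ofReal,
    Complex.Gamma_ofReal, ← Complex.ofReal_mul, ← Complex.ofReal_mul] at key
  have hreal : Real.Gamma a * Real.Gamma b =
      Real.Gamma (a + b) * ∫ t in Set.Ioo (0:ℝ) 1, t ^ (a - 1) * (1 - t) ^ (b - 1) := by
    exact_mod_cast key
  have hG : Real.Gamma (a + b) ≠ 0 := (Real.Gamma_pos_of_pos (by linarith)).ne'
  field_simp [hG] at hreal ⊢
  linarith [hreal]

lemma G_val (s θ2 : ℝ) (h1 : 0 < s + θ2) (h2 : 0 < s - θ2) :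
    ∫ x : ℝ, sech x ^ s * Real.exp (θ2 * x)
      = 2 ^ (s-1) * (Real.Gamma ((s-θ2)/2) * Real.Gamma ((s+θ2)/2) / Real.Gamma s) := by
  rw [subst_eq, MeasureTheory.integral_const_mul,
    beta_Ioo (show 0 < (s+θ2)/2 by linarith) (show 0 < (s-θ2)/2 by linarith),
    show (s+θ2)/2 + (s-θ2)/2 = s by ring]
  ring

lemma ne_neg_nat {z : ℝ} (hz : 0 < z) : ∀ m : ℕ, z ≠ -m := by
  intro m h
  have : (0:ℝ) ≤ m := m.cast_nonneg
  rw [h] at hz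
  linarith

lemma Gamma_hasDerivAt {z : ℝ} (hz : 0 < z) :
    HasDerivAt Real.Gamma (deriv Real.Gamma z) z :=
  (Real.differentiableAt_Gamma (ne_neg_nat hz)).hasDerivAt

lemma digamma_eq {z : ℝ} (hz : 0 < z) :
    digamma z = deriv Real.Gamma z / Real.Gamma z :=
  ((Gamma_hasDerivAt hz).log (Real.Gamma_pos_of_pos hz).ne').deriv

end Aux

/-- The mean of `log(sech X)` under the beta-logistic distribution is
`(1/2)ψ((θ¹−θ²)/2) + (1/2)ψ((θ¹+θ²)/2) − ψ(θ¹) + log 2`. -/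
theorem betaLogistic_mean_log_sech (θ1 θ2 : ℝ) (h1 : 0 < θ1 + θ2) (h2 : 0 < θ1 - θ2) :
    (∫ x : ℝ, Real.log (sech x) * betaLogisticPDF θ1 θ2 x) =
      (1 / 2) * digamma ((θ1 - θ2) / 2) + (1 / 2) * digamma ((θ1 + θ2) / 2) -
        digamma θ1 + Real.log 2 := by
  have hθ1 : 0 < θ1 := by linarith
  set ε : ℝ := min ((θ1 + θ2) / 2) ((θ1 - θ2) / 2) with hεdef
  have hε : 0 < ε := lt_min (by linarith) (by linarith)
  have hε1 : ε ≤ (θ1 + θ2) / 2 := min_le_left _ _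
  have hε2 : ε ≤ (θ1 - θ2) / 2 := min_le_right _ _
  set p : ℝ := θ1 - ε with hpdef
  have hp1 : 0 < p + θ2 := by simp only [hpdef]; linarith
  have hp2 : 0 < p - θ2 := by simp only [hpdef]; linarith
  -- derivative under the integral sign
  have hDI := hasDerivAt_integral_of_dominated_loc_of_deriv_le (μ := volume)
    (F := fun s x => sech x ^ s * Real.exp (θ2 * x))
    (F' := fun s x => Real.log (sech x) * (sech x ^ s * Real.exp (θ2 * x)))
    (x₀ := θ1) (bound := fun x => |x| * (sech x ^ p * Real.exp (θ2 * x))) (Metric.ball_mem_nhds θ1 hε)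
    (Filter.Eventually.of_forall fun s =>
      ((continuous_sech_rpow s).mul
        (Real.continuous_exp.comp (continuous_const.mul continuous_id))).aestronglyMeasurable)
    (integrable_sech_exp θ1 θ2 h1 h2)
    (((continuous_sech.log (fun x => (sech_pos x).ne')).mul ((continuous_sech_rpow θ1).mul
      (Real.continuous_exp.comp (continuous_const.mul continuous_id)))).aestronglyMeasurable)
    (ae_of_all _ fun x s hs => by
      rw [Real.norm_eq_abs, abs_mul, abs_of_nonneg
        (le_of_lt (mul_pos (Real.rpow_pos_of_pos (sech_pos x) s) (Real.exp_pos _)))]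
      have hsp : p ≤ s := by
        have hd := Metric.mem_ball.1 hs
        rw [Real.dist_eq] at hd
        have hd2 := abs_sub_lt_iff.1 hd
        simp only [hpdef]
        linarith [hd2.2]
      have h3 : sech x ^ s ≤ sech x ^ p :=
        Real.rpow_le_rpow_of_exponent_ge (sech_pos x) (sech_le_one x) hsp
      calc |Real.log (sech x)| * (sech x ^ s * Real.exp (θ2 * x))
          ≤ |x| * (sech x ^ p * Real.exp (θ2 * x)) := by
            apply mul_le_mul (abs_log_sech_le x)
              (mul_le_mul_of_nonneg_right h3 (Real.exp_pos _).le)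
              (mul_pos (Real.rpow_pos_of_pos (sech_pos x) s) (Real.exp_pos _)).le
              (abs_nonneg x)
        _ = |x| * (sech x ^ p * Real.exp (θ2 * x)) := rfl)
    (integrable_abs_sech_exp p θ2 hp1 hp2)
    (ae_of_all _ fun x s _ => by
      have h := ((Real.hasStrictDerivAt_const_rpow (sech_pos x) s).hasDerivAt).mul_const
        (Real.exp (θ2 * x))
      refine h.congr_deriv ?_
      ring)
  obtain ⟨hF'int, hderiv⟩ := hDI
  -- the explicit formula for the integral, valid near θ1
  set H : ℝ → ℝ := fun s => (2:ℝ) ^ (s-1) *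
    (Real.Gamma ((s-θ2)/2) * Real.Gamma ((s+θ2)/2) / Real.Gamma s) with hHdef
  have hopen : IsOpen {s : ℝ | 0 < s + θ2 ∧ 0 < s - θ2} := by
    have o1 : IsOpen {s : ℝ | 0 < s + θ2} :=
      isOpen_lt continuous_const (continuous_id.add continuous_const)
    have o2 : IsOpen {s : ℝ | 0 < s - θ2} :=
      isOpen_lt continuous_const (continuous_id.sub continuous_const)
    exact (o1.inter o2)
  have hmem : θ1 ∈ {s : ℝ | 0 < s + θ2 ∧ 0 < s - θ2} := ⟨h1, h2⟩
  have hev : (fun s => ∫ x : ℝ, sech x ^ s * Real.exp (θ2 * x)) =ᶠ[nhds θ1] H :=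
    Filter.eventuallyEq_of_mem (hopen.mem_nhds hmem) (fun s hs => G_val s θ2 hs.1 hs.2)
  have hHd1 : HasDerivAt H
      (∫ x : ℝ, Real.log (sech x) * (sech x ^ θ1 * Real.exp (θ2 * x))) θ1 :=
    hderiv.congr_of_eventuallyEq hev.symm
  -- the explicit derivative of H
  have hbpos : 0 < (θ1 - θ2)/2 := by linarith
  have hapos : 0 < (θ1 + θ2)/2 := by linarith
  have hΓb := Real.Gamma_pos_of_pos hbpos
  have hΓa := Real.Gamma_pos_of_pos hapos
  have hΓt := Real.Gamma_pos_of_pos hθ1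
  have hd2 : HasDerivAt (fun s : ℝ => (2:ℝ) ^ (s-1)) ((2:ℝ) ^ (θ1-1) * Real.log 2) θ1 := by
    have h := (Real.hasStrictDerivAt_const_rpow (by norm_num : (0:ℝ) < 2) (θ1-1)).hasDerivAt
    have := h.comp θ1 ((hasDerivAt_id θ1).sub_const 1)
    simpa [Function.comp_def] using this
  have hgb : HasDerivAt (fun s : ℝ => Real.Gamma ((s-θ2)/2))
      (deriv Real.Gamma ((θ1-θ2)/2) * (1/2)) θ1 := by
    have hin : HasDerivAt (fun s : ℝ => (s - θ2)/2) (1/2) θ1 := by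
      simpa using ((hasDerivAt_id θ1).sub_const θ2).div_const 2
    have := (Gamma_hasDerivAt hbpos).comp θ1 hin
    simpa [Function.comp_def] using this
  have hga : HasDerivAt (fun s : ℝ => Real.Gamma ((s+θ2)/2))
      (deriv Real.Gamma ((θ1+θ2)/2) * (1/2)) θ1 := by
    have hin : HasDerivAt (fun s : ℝ => (s + θ2)/2) (1/2) θ1 := by
      simpa using ((hasDerivAt_id θ1).add_const θ2).div_const 2
    have := (Gamma_hasDerivAt hapos).comp θ1 hin
    simpa [Function.comp_def] using this
  have hgt : HasDerivAt Real.Gamma (deriv Real.Gamma θ1) θ1 := Gamma_hasDerivAt hθ1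
  have hHd2 := hd2.mul (((hgb.mul hga).div hgt hΓt.ne'))
  have hder_eq := hHd1.unique hHd2
  -- final computation
  have hpdf : (fun x => Real.log (sech x) * betaLogisticPDF θ1 θ2 x)
      = fun x => ((2:ℝ) ^ (1-θ1) /
          (Real.Gamma ((θ1-θ2)/2) * Real.Gamma ((θ1+θ2)/2) / Real.Gamma θ1)) *
        (Real.log (sech x) * (sech x ^ θ1 * Real.exp (θ2 * x))) := by
    funext x
    rw [betaLogisticPDF]
    ring
  rw [hpdf, MeasureTheory.integral_const_mul, hder_eq]
  rw [digamma_eq hbpos, digamma_eq hapos, digamma_eq hθ1]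
  have hQ : (2:ℝ) ^ (1-θ1) = ((2:ℝ) ^ (θ1-1))⁻¹ := by
    rw [show (1-θ1) = -(θ1-1) by ring, Real.rpow_neg (by norm_num : (0:ℝ) ≤ 2)]
  have hP : (0:ℝ) < (2:ℝ) ^ (θ1-1) := Real.rpow_pos_of_pos (by norm_num) _
  rw [hQ]
  simp only [Pi.mul_apply, Pi.div_apply]
  field_simp
  ring
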